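/- Fix γ ∈ (0, 1) and β ∈ (0, 1], and define f_Cournot(x) = 2x^β − γ(1−x)^β − (2−γ) x^β (1−x)^β for x ∈ [0, 1]. Then f_Cournot is strictly increasing on [0, 1], f_Cournot(0) < 0 and f_Cournot(1) > 0, so there is a unique x_C(γ, β) ∈ (0, 1) with f_Cournot(x_C) = 0; moreover for any n₁, n₂ > 0 and i ∈ {1, 2}, the criterion (2 − γ)(n_i^{−β} − (n₁+n₂)^{−β}) > γ (n_{−i}^{−β} − n_i^{−β}) holds if and only if n_{−i}/(n₁+n₂) > x_C(γ, β). -/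

import Mathlib

/-- The Cournot collaboration criterion function
`f_Cournot(x) = 2x^β - γ(1-x)^β - (2-γ) x^β (1-x)^β`. -/
noncomputable def fCournot (γ β x : ℝ) : ℝ :=
  2 * x ^ β - γ * (1 - x) ^ β - (2 - γ) * x ^ β * (1 - x) ^ β

/-- **Existence and characterization of the Cournot data-sharing threshold.** For
`γ ∈ (0,1)` and `β ∈ (0,1]`, `f_Cournot` is strictly increasing on `[0,1]`, negative at
`0` and positive at `1`, so it has a unique root `x_C ∈ (0,1)`; moreover for any
`n₁, n₂ > 0` and each firm `i ∈ {1,2}`, the criterion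
`(2-γ)(n_i^{-β} - (n₁+n₂)^{-β}) > γ (n_{-i}^{-β} - n_i^{-β})` holds iff
`n_{-i}/(n₁+n₂) > x_C`. -/
theorem cournot_threshold
    (γ β : ℝ) (hγ₁ : 0 < γ) (hγ₂ : γ < 1) (hβ₁ : 0 < β) (hβ₂ : β ≤ 1) :
    StrictMonoOn (fCournot γ β) (Set.Icc 0 1) ∧
    fCournot γ β 0 < 0 ∧ 0 < fCournot γ β 1 ∧
    ∃ xC ∈ Set.Ioo (0 : ℝ) 1, fCournot γ β xC = 0 ∧
      (∀ y ∈ Set.Ioo (0 : ℝ) 1, fCournot γ β y = 0 → y = xC) ∧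
      ∀ n₁ n₂ : ℝ, 0 < n₁ → 0 < n₂ →
        (((2 - γ) * (n₁ ^ (-β) - (n₁ + n₂) ^ (-β)) > γ * (n₂ ^ (-β) - n₁ ^ (-β))) ↔
          n₂ / (n₁ + n₂) > xC) ∧
        (((2 - γ) * (n₂ ^ (-β) - (n₁ + n₂) ^ (-β)) > γ * (n₁ ^ (-β) - n₂ ^ (-β))) ↔
          n₁ / (n₁ + n₂) > xC) := by
  have hβne : β ≠ 0 := ne_of_gt hβ₁
  have hmono : StrictMonoOn (fCournot γ β) (Set.Icc 0 1) := by
    intro a ha b hb hab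
    obtain ⟨ha0, ha1⟩ := ha
    obtain ⟨hb0, hb1⟩ := hb
    have hA : a ^ β < b ^ β := Real.rpow_lt_rpow ha0 hab hβ₁
    have hQ : (1 - b) ^ β < (1 - a) ^ β :=
      Real.rpow_lt_rpow (by linarith) (by linarith) hβ₁
    have hA0 : 0 ≤ a ^ β := Real.rpow_nonneg ha0 β
    have hQ0 : 0 ≤ (1 - b) ^ β := Real.rpow_nonneg (by linarith) β
    have hP1 : (1 - a) ^ β ≤ 1 := Real.rpow_le_one (by linarith) (by linarith) hβ₁.le
    have h1 : 0 < (b ^ β - a ^ β) * (2 - (2 - γ) * (1 - a) ^ β) := by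
      apply mul_pos (by linarith)
      nlinarith
    have h2 : 0 < ((1 - a) ^ β - (1 - b) ^ β) * (γ + (2 - γ) * b ^ β) := by
      apply mul_pos (by linarith)
      nlinarith
    simp only [fCournot]
    nlinarith [h1, h2]
  have hf0 : fCournot γ β 0 < 0 := by
    simp only [fCournot, sub_zero, Real.zero_rpow hβne, Real.one_rpow]
    linarith
  have hf1 : 0 < fCournot γ β 1 := by
    simp only [fCournot, sub_self, Real.zero_rpow hβne, Real.one_rpow]
    linarith
  have hcont : Continuous (fCournot γ β) := by
    have h1 : Continuous fun x : ℝ => x ^ β :=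
      continuous_iff_continuousAt.2 fun x => Real.continuousAt_rpow_const x β (Or.inr hβ₁.le)
    have h2 : Continuous fun x : ℝ => (1 - x) ^ β :=
      h1.comp (continuous_const.sub continuous_id)
    unfold fCournot
    exact ((continuous_const.mul h1).sub (continuous_const.mul h2)).sub
      ((continuous_const.mul h1).mul h2)
  have hIVT := intermediate_value_Ioo (by norm_num : (0:ℝ) ≤ 1) hcont.continuousOn
  have h0mem : (0 : ℝ) ∈ Set.Ioo (fCournot γ β 0) (fCournot γ β 1) := ⟨hf0, hf1⟩
  obtain ⟨xC, hxC, hfxC⟩ := hIVT h0mem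
  have hiff : ∀ x ∈ Set.Ioo (0:ℝ) 1, (0 < fCournot γ β x ↔ xC < x) := by
    intro x hx
    constructor
    · intro h
      by_contra hle
      push_neg at hle
      rcases eq_or_lt_of_le hle with he | hlt
      · rw [← he] at hfxC; linarith
      · have := hmono (Set.Ioo_subset_Icc_self hx) (Set.Ioo_subset_Icc_self hxC) hlt
        rw [hfxC] at this; linarith
    · intro h
      have := hmono (Set.Ioo_subset_Icc_self hxC) (Set.Ioo_subset_Icc_self hx) h
      rw [hfxC] at this; exact this
  have key : ∀ n₁ n₂ : ℝ, 0 < n₁ → 0 < n₂ →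
      ((2 - γ) * (n₁ ^ (-β) - (n₁ + n₂) ^ (-β)) > γ * (n₂ ^ (-β) - n₁ ^ (-β)) ↔
        0 < fCournot γ β (n₂ / (n₁ + n₂))) := by
    intro n₁ n₂ h1 h2
    have hs : 0 < n₁ + n₂ := by linarith
    set A := (n₂ / (n₁ + n₂)) ^ β with hAdef
    set P := (n₁ / (n₁ + n₂)) ^ β with hPdef
    set S := (n₁ + n₂) ^ β with hSdef
    have hA : 0 < A := Real.rpow_pos_of_pos (div_pos h2 hs) β
    have hP : 0 < P := Real.rpow_pos_of_pos (div_pos h1 hs) β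
    have hS : 0 < S := Real.rpow_pos_of_pos hs β
    have e1 : n₁ ^ (-β) = P⁻¹ * S⁻¹ := by
      rw [Real.rpow_neg h1.le, ← mul_inv]
      congr 1
      rw [hPdef, hSdef, ← Real.mul_rpow (by positivity) hs.le, div_mul_cancel₀ _ hs.ne']
    have e2 : n₂ ^ (-β) = A⁻¹ * S⁻¹ := by
      rw [Real.rpow_neg h2.le, ← mul_inv]
      congr 1
      rw [hAdef, hSdef, ← Real.mul_rpow (by positivity) hs.le, div_mul_cancel₀ _ hs.ne']
    have e3 : (n₁ + n₂) ^ (-β) = S⁻¹ := by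
      rw [Real.rpow_neg hs.le, hSdef]
    have e4 : (1 : ℝ) - n₂ / (n₁ + n₂) = n₁ / (n₁ + n₂) := by
      field_simp
      ring
    have efx : fCournot γ β (n₂ / (n₁ + n₂)) = 2*A - γ*P - (2-γ)*A*P := by
      rw [fCournot, e4]
    rw [e1, e2, e3, efx, gt_iff_lt]
    have hmain : (2 - γ) * (P⁻¹ * S⁻¹ - S⁻¹) - γ * (A⁻¹ * S⁻¹ - P⁻¹ * S⁻¹)
        = (2*A - γ*P - (2-γ)*A*P) * (A⁻¹ * P⁻¹ * S⁻¹) := by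
      field_simp
      ring
    have hpos : 0 < A⁻¹ * P⁻¹ * S⁻¹ := by positivity
    constructor
    · intro h
      have h0 : 0 < (2*A - γ*P - (2-γ)*A*P) * (A⁻¹ * P⁻¹ * S⁻¹) := by
        rw [← hmain]; linarith
      by_contra h'
      push_neg at h'
      nlinarith
    · intro h
      have h0 : 0 < (2*A - γ*P - (2-γ)*A*P) * (A⁻¹ * P⁻¹ * S⁻¹) := mul_pos h hpos
      rw [← hmain] at h0
      linarith
  refine ⟨hmono, hf0, hf1, xC, hxC, hfxC, ?_, ?_⟩
  · intro y hy hfy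
    exact hmono.injOn (Set.Ioo_subset_Icc_self hy) (Set.Ioo_subset_Icc_self hxC)
      (by rw [hfy, hfxC])
  · intro n₁ n₂ h1 h2
    have hs : 0 < n₁ + n₂ := by linarith
    have hx1 : n₂ / (n₁ + n₂) ∈ Set.Ioo (0:ℝ) 1 :=
      ⟨div_pos h2 hs, (div_lt_one hs).2 (by linarith)⟩
    have hx2 : n₁ / (n₁ + n₂) ∈ Set.Ioo (0:ℝ) 1 :=
      ⟨div_pos h1 hs, (div_lt_one hs).2 (by linarith)⟩
    constructor
    · exact (key n₁ n₂ h1 h2).trans (hiff _ hx1)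
    · have hk := key n₂ n₁ h2 h1
      rw [add_comm n₂ n₁] at hk
      exact hk.trans (hiff _ hx2)
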